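/- Let σ : ℤ' → [0,1] satisfy Σ_{l<0} σ(l) < ∞ and fix s ∈ ℤ' with Π_{i=1}^∞ (1 − σ(−i−s)) > 0. For L > 0 and a, b ∈ ℤ' define f̂(a) := σ(a−s−1/2)·(J_{a−1/2}(2L), L·J_{a+1/2}(2L))ᵀ and ĝ(a) := (1 − σ(a−s−1/2)·K^Be(a,a))^{−1}·(L·J_{a+1/2}(2L), −J_{a−1/2}(2L))ᵀ, and the scalar kernel d(a,b) := ĝ(b)ᵀ f̂(a)/(a−b) for a ≠ b, d(a,a) := 0. Then there exist constants L* > 0 and c > 0 (depending on s and σ) such that for all 0 < L < L* and every square-summable r : ℤ' → ℂ², the sums (Dr)(a) := Σ_{b∈ℤ'} d(a,b)·r(b) converge absolutely for every a ∈ ℤ', the function Dr is square-summable, and ‖Dr‖_{ℓ²} ≤ c·L·‖r‖_{ℓ²}. -/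

import Mathlib

open scoped Matrix

/-!
Half-integers `ℤ' = ℤ + 1/2` are parametrized by `ℤ`: the half-integer `a = m + 1/2`
corresponds to `m : ℤ`; `σ : ℤ' → [0,1]` is represented as `σ : ℤ → ℝ` and `s = t + 1/2` by
`t : ℤ`.  Thus `σ(a - s - 1/2)` reads `σ (m - t - 1)`, `J_{a-1/2} = J_m`, `J_{a+1/2} = J_{m+1}`,
`a - b = m - n`, and `K^Be(a,a) = ∑_{j≥0} J_{m+j+1}(2L)²`.  Functions `r : ℤ' → ℂ²` are
represented as `r : ℤ → EuclideanSpace ℂ (Fin 2)` (Euclidean norm on `ℂ²`).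
-/
noncomputable def besselJnat (L : ℝ) (n : ℕ) : ℝ :=
  ∑' j : ℕ, (-1 : ℝ) ^ j * L ^ (2 * j + n) / (Nat.factorial j * Nat.factorial (n + j))

noncomputable def besselJint (L : ℝ) (n : ℤ) : ℝ :=
  if 0 ≤ n then besselJnat L n.toNat else (-1 : ℝ) ^ (-n).toNat * besselJnat L (-n).toNat

/-- Diagonal of the discrete Bessel kernel, `K^Be(m + 1/2, m + 1/2)`. -/
noncomputable def KBeDiag (L : ℝ) (m : ℤ) : ℝ :=
  ∑' j : ℕ, besselJint L (m + j + 1) * besselJint L (m + j + 1)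

/-- `f̂(a) = σ(a-s-1/2) (J_{a-1/2}(2L), L J_{a+1/2}(2L))ᵀ` for `a = m + 1/2`. -/
noncomputable def fhat (σ : ℤ → ℝ) (L : ℝ) (t m : ℤ) : Fin 2 → ℝ :=
  ![σ (m - t - 1) * besselJint L m, σ (m - t - 1) * (L * besselJint L (m + 1))]

/-- `ĝ(a) = (1 - σ(a-s-1/2) K^Be(a,a))⁻¹ (L J_{a+1/2}(2L), -J_{a-1/2}(2L))ᵀ`
for `a = m + 1/2`. -/
noncomputable def ghat (σ : ℤ → ℝ) (L : ℝ) (t m : ℤ) : Fin 2 → ℝ :=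
  ![(1 - σ (m - t - 1) * KBeDiag L m)⁻¹ * (L * besselJint L (m + 1)),
    (1 - σ (m - t - 1) * KBeDiag L m)⁻¹ * (-besselJint L m)]

/-- The scalar kernel `d(a,b) = ĝ(b)ᵀ f̂(a)/(a-b)` for `a ≠ b`, `d(a,a) = 0`. -/
noncomputable def dker (σ : ℤ → ℝ) (L : ℝ) (t m n : ℤ) : ℝ :=
  if m = n then 0 else (ghat σ L t n ⬝ᵥ fhat σ L t m) / ((m : ℝ) - (n : ℝ))

private lemma tprod_le_apply {f : ℕ → ℝ} (h0 : ∀ i, 0 ≤ f i) (h1 : ∀ i, f i ≤ 1) (i : ℕ) :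
    ∏' j, f j ≤ f i := by
  classical
  have hbdd : BddBelow (Set.range fun s : Finset ℕ => ∏ j ∈ s, f j) := by
    refine ⟨0, ?_⟩
    rintro _ ⟨s, rfl⟩
    exact Finset.prod_nonneg fun j _ => h0 j
  have hanti : Antitone (fun s : Finset ℕ => ∏ j ∈ s, f j) := by
    intro s t hst
    simp only []
    rw [← Finset.prod_sdiff hst]
    exact mul_le_of_le_one_left (Finset.prod_nonneg fun j _ => h0 j)
      (Finset.prod_le_one (fun j _ => h0 j) (fun j _ => h1 j))
  have hp : HasProd f (⨅ s : Finset ℕ, ∏ j ∈ s, f j) := tendsto_atTop_ciInf hanti hbdd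
  rw [hp.tprod_eq]
  simpa using ciInf_le hbdd ({i} : Finset ℕ)

private lemma summable_mul_of_sq {ι : Type*} {a b : ι → ℝ}
    (ha : ∀ i, 0 ≤ a i) (hb : ∀ i, 0 ≤ b i)
    (hA : Summable fun i => a i ^ 2) (hB : Summable fun i => b i ^ 2) :
    Summable fun i => a i * b i := by
  refine Summable.of_nonneg_of_le (fun i => mul_nonneg (ha i) (hb i)) (fun i => ?_)
    ((hA.add hB).mul_left (1/2))
  nlinarith [sq_nonneg (a i - b i)]

private lemma tsum_mul_le_sqrt {ι : Type*} {a b : ι → ℝ}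
    (ha : ∀ i, 0 ≤ a i) (hb : ∀ i, 0 ≤ b i)
    (hA : Summable fun i => a i ^ 2) (hB : Summable fun i => b i ^ 2) :
    ∑' i, a i * b i ≤ Real.sqrt (∑' i, a i ^ 2) * Real.sqrt (∑' i, b i ^ 2) := by
  refine Summable.tsum_le_of_sum_le (summable_mul_of_sq ha hb hA hB) fun s => ?_
  have h1 : (∑ i ∈ s, a i * b i) ^ 2 ≤ (∑ i ∈ s, a i ^ 2) * ∑ i ∈ s, b i ^ 2 :=
    Finset.sum_mul_sq_le_sq_mul_sq s a b
  have h2 : (∑ i ∈ s, a i ^ 2) ≤ ∑' i, a i ^ 2 :=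
    Summable.sum_le_tsum s (fun i _ => sq_nonneg _) hA
  have h3 : (∑ i ∈ s, b i ^ 2) ≤ ∑' i, b i ^ 2 :=
    Summable.sum_le_tsum s (fun i _ => sq_nonneg _) hB
  have hs0 : 0 ≤ ∑ i ∈ s, a i * b i :=
    Finset.sum_nonneg fun i _ => mul_nonneg (ha i) (hb i)
  have hA0 : 0 ≤ ∑ i ∈ s, a i ^ 2 := Finset.sum_nonneg fun i _ => sq_nonneg _
  have hB0 : 0 ≤ ∑ i ∈ s, b i ^ 2 := Finset.sum_nonneg fun i _ => sq_nonneg _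
  calc ∑ i ∈ s, a i * b i = Real.sqrt ((∑ i ∈ s, a i * b i) ^ 2) := (Real.sqrt_sq hs0).symm
    _ ≤ Real.sqrt ((∑' i, a i ^ 2) * ∑' i, b i ^ 2) := by
        apply Real.sqrt_le_sqrt
        exact h1.trans (mul_le_mul h2 h3 hB0 (hA0.trans h2))
    _ = Real.sqrt (∑' i, a i ^ 2) * Real.sqrt (∑' i, b i ^ 2) :=
        Real.sqrt_mul (tsum_nonneg fun i => sq_nonneg _) _

section bessel

variable {L : ℝ} (hL0 : 0 ≤ L) (hL1 : L < 1)
include hL0 hL1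

private lemma term_abs_le (n j : ℕ) :
    |(-1 : ℝ) ^ j * L ^ (2 * j + n) / (Nat.factorial j * Nat.factorial (n + j))| ≤
      L ^ n / Nat.factorial n * (L ^ 2) ^ j := by
  have hd : (1 : ℝ) ≤ (Nat.factorial j : ℝ) * Nat.factorial (n + j) := by
    have := Nat.one_le_iff_ne_zero.2 (Nat.factorial_ne_zero j)
    have := Nat.one_le_iff_ne_zero.2 (Nat.factorial_ne_zero (n + j))
    have h1 : (1 : ℝ) ≤ (Nat.factorial j : ℝ) := by exact_mod_cast ‹1 ≤ Nat.factorial j›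
    have h2 : (1 : ℝ) ≤ (Nat.factorial (n + j) : ℝ) := by
      exact_mod_cast ‹1 ≤ Nat.factorial (n + j)›
    nlinarith
  have hfn : (1 : ℝ) ≤ (Nat.factorial n : ℝ) := by
    exact_mod_cast Nat.one_le_iff_ne_zero.2 (Nat.factorial_ne_zero n)
  have hfn' : ((Nat.factorial n : ℝ)) ≤ (Nat.factorial j : ℝ) * Nat.factorial (n + j) := by
    have h1 : (Nat.factorial n : ℝ) ≤ (Nat.factorial (n + j) : ℝ) := by
      exact_mod_cast Nat.factorial_le (Nat.le_add_right n j)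
    have h2 : (1 : ℝ) ≤ (Nat.factorial j : ℝ) := by
      exact_mod_cast Nat.one_le_iff_ne_zero.2 (Nat.factorial_ne_zero j)
    nlinarith [Nat.cast_nonneg (α := ℝ) (Nat.factorial (n + j))]
  rw [abs_div, abs_mul, abs_pow, abs_neg, abs_one, one_pow, one_mul,
    abs_of_nonneg (pow_nonneg hL0 _), abs_of_nonneg (by positivity)]
  calc L ^ (2 * j + n) / ((Nat.factorial j : ℝ) * Nat.factorial (n + j))
      ≤ L ^ (2 * j + n) / (Nat.factorial n : ℝ) := by
        apply div_le_div_of_nonneg_left (pow_nonneg hL0 _) (by linarith) hfn'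
    _ = L ^ n / Nat.factorial n * (L ^ 2) ^ j := by
        rw [pow_add, pow_mul]; ring

private lemma besselJnat_summable (n : ℕ) :
    Summable (fun j : ℕ => (-1 : ℝ) ^ j * L ^ (2 * j + n) /
      (Nat.factorial j * Nat.factorial (n + j))) := by
  have hq0 : (0 : ℝ) ≤ L ^ 2 := sq_nonneg L
  have hq1 : L ^ 2 < 1 := by nlinarith
  have hg : Summable (fun j : ℕ => L ^ n / Nat.factorial n * (L ^ 2) ^ j) :=
    (summable_geometric_of_lt_one hq0 hq1).mul_left _
  exact hg.of_norm_bounded (fun j => term_abs_le hL0 hL1 n j)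

private lemma besselJnat_abs_le (n : ℕ) :
    |besselJnat L n| ≤ L ^ n / Nat.factorial n * (1 - L ^ 2)⁻¹ := by
  have hq0 : (0 : ℝ) ≤ L ^ 2 := sq_nonneg L
  have hq1 : L ^ 2 < 1 := by nlinarith
  have hs := besselJnat_summable hL0 hL1 n
  rw [besselJnat, ← Real.norm_eq_abs]
  calc ‖∑' j : ℕ, (-1 : ℝ) ^ j * L ^ (2 * j + n) /
        (Nat.factorial j * Nat.factorial (n + j))‖
      ≤ ∑' j : ℕ, ‖(-1 : ℝ) ^ j * L ^ (2 * j + n) /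
        (Nat.factorial j * Nat.factorial (n + j))‖ := norm_tsum_le_tsum_norm hs.abs
    _ ≤ ∑' j : ℕ, L ^ n / Nat.factorial n * (L ^ 2) ^ j := by
        refine Summable.tsum_le_tsum (fun j => term_abs_le hL0 hL1 n j) hs.abs ?_
        exact (summable_geometric_of_lt_one hq0 hq1).mul_left _
    _ = L ^ n / Nat.factorial n * (1 - L ^ 2)⁻¹ := by
        rw [tsum_mul_left, tsum_geometric_of_lt_one hq0 hq1]

private lemma besselJint_abs_le (k : ℤ) :
    |besselJint L k| ≤ L ^ k.natAbs / Nat.factorial k.natAbs * (1 - L ^ 2)⁻¹ := by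
  unfold besselJint
  split_ifs with h
  · have : k.toNat = k.natAbs := by omega
    rw [this]; exact besselJnat_abs_le hL0 hL1 _
  · have : (-k).toNat = k.natAbs := by omega
    rw [this, abs_mul, abs_pow, abs_neg, abs_one, one_pow, one_mul]
    exact besselJnat_abs_le hL0 hL1 _

end bessel

private lemma besselJint_abs_le_two {L : ℝ} (hL0 : 0 ≤ L) (hL4 : L ≤ 1/4) (k : ℤ) :
    |besselJint L k| ≤ 2 * L ^ k.natAbs := by
  have hL1 : L < 1 := by linarith
  have h := besselJint_abs_le hL0 hL1 k
  have hfn : (1 : ℝ) ≤ (Nat.factorial k.natAbs : ℝ) := by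
    exact_mod_cast Nat.one_le_iff_ne_zero.2 (Nat.factorial_ne_zero _)
  have hq : L ^ 2 ≤ 1/16 := by nlinarith
  have hinv : (1 - L ^ 2)⁻¹ ≤ 2 := by
    rw [inv_le_comm₀ (by nlinarith) (by norm_num)]
    nlinarith
  have hLn : (0:ℝ) ≤ L ^ k.natAbs := pow_nonneg hL0 _
  have hinv0 : (0:ℝ) ≤ (1 - L ^ 2)⁻¹ := inv_nonneg.2 (by nlinarith)
  calc |besselJint L k| ≤ L ^ k.natAbs / Nat.factorial k.natAbs * (1 - L ^ 2)⁻¹ := h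
    _ ≤ L ^ k.natAbs * 2 := by
        have hd : L ^ k.natAbs / Nat.factorial k.natAbs ≤ L ^ k.natAbs := by
          rw [div_le_iff₀ (by linarith)]
          nlinarith
        exact mul_le_mul hd hinv hinv0 hLn
    _ = 2 * L ^ k.natAbs := by ring

private lemma besselJnat_zero_close {L : ℝ} (hL0 : 0 ≤ L) (hL4 : L ≤ 1/4) :
    |besselJnat L 0 - (1 - L ^ 2)| ≤ L ^ 4 / 3 := by
  have hL1 : L < 1 := by linarith
  have hq0 : (0 : ℝ) ≤ L ^ 2 := sq_nonneg L
  have hq1 : L ^ 2 < 1 := by nlinarith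
  set f : ℕ → ℝ := fun j => (-1 : ℝ) ^ j * L ^ (2 * j + 0) /
      (Nat.factorial j * Nat.factorial (0 + j)) with hf
  have hs : Summable f := besselJnat_summable hL0 hL1 0
  have hs1 : Summable (fun j => f (j + 1)) := by
    exact (summable_nat_add_iff 1).2 hs
  have hs2 : Summable (fun j => f (j + 1 + 1)) := by
    exact (summable_nat_add_iff 1).2 hs1
  have hsplit : besselJnat L 0 = f 0 + (f 1 + ∑' j : ℕ, f (j + 1 + 1)) := by
    rw [besselJnat, ← hf, Summable.tsum_eq_zero_add hs, Summable.tsum_eq_zero_add hs1]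
  have hf0 : f 0 = 1 := by norm_num [hf]
  have hf1 : f 1 = -L ^ 2 := by norm_num [hf, Nat.factorial]
  have hterm : ∀ j : ℕ, ‖f (j + 1 + 1)‖ ≤ L ^ 4 / 4 * (L ^ 2) ^ j := by
    intro j
    have hfac : (4 : ℝ) ≤ (Nat.factorial (j+2) : ℝ) * Nat.factorial (0 + (j+2)) := by
      have h2 : (2:ℕ) ≤ Nat.factorial (j+2) := by
        calc (2:ℕ) = Nat.factorial 2 := rfl
        _ ≤ Nat.factorial (j+2) := Nat.factorial_le (by omega)
      have h2' : (2:ℝ) ≤ (Nat.factorial (j+2) : ℝ) := by exact_mod_cast h2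
      have h2'' : (2:ℝ) ≤ (Nat.factorial (0 + (j+2)) : ℝ) := by
        rw [Nat.zero_add]; exact h2'
      nlinarith
    have : f (j + 1 + 1) = (-1 : ℝ) ^ (j+2) * L ^ (2 * (j+2) + 0) /
        (Nat.factorial (j+2) * Nat.factorial (0 + (j+2))) := rfl
    rw [this, Real.norm_eq_abs, abs_div, abs_mul, abs_pow, abs_neg, abs_one, one_pow, one_mul,
      abs_of_nonneg (pow_nonneg hL0 _), abs_of_nonneg (by positivity)]
    calc L ^ (2 * (j+2) + 0) / ((Nat.factorial (j+2) : ℝ) * Nat.factorial (0 + (j+2)))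
        ≤ L ^ (2 * (j+2) + 0) / 4 :=
          div_le_div_of_nonneg_left (pow_nonneg hL0 _) (by norm_num) hfac
      _ = L ^ 4 / 4 * (L ^ 2) ^ j := by
          rw [← pow_mul]; ring
  have htail : |∑' j : ℕ, f (j + 1 + 1)| ≤ L ^ 4 / 3 := by
    rw [← Real.norm_eq_abs]
    calc ‖∑' j : ℕ, f (j + 1 + 1)‖ ≤ ∑' j : ℕ, ‖f (j + 1 + 1)‖ :=
          norm_tsum_le_tsum_norm hs2.norm
      _ ≤ ∑' j : ℕ, L ^ 4 / 4 * (L ^ 2) ^ j := by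
          refine Summable.tsum_le_tsum hterm hs2.norm ?_
          exact (summable_geometric_of_lt_one hq0 hq1).mul_left _
      _ = L ^ 4 / 4 * (1 - L ^ 2)⁻¹ := by
          rw [tsum_mul_left, tsum_geometric_of_lt_one hq0 hq1]
      _ ≤ L ^ 4 / 3 := by
          have h15 : (1 - L^2)⁻¹ ≤ 4/3 := by
            rw [inv_le_comm₀ (by nlinarith) (by norm_num)]
            nlinarith
          have : (0:ℝ) ≤ L ^ 4 := by positivity
          nlinarith
  have : besselJnat L 0 - (1 - L ^ 2) = ∑' j : ℕ, f (j + 1 + 1) := by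
    rw [hsplit, hf0, hf1]; ring
  rw [this]; exact htail

private lemma natAbs_neg_succ (n : ℕ) : (-((n:ℤ) + 1)).natAbs = n + 1 := by omega

private lemma summable_pow_natAbs {x : ℝ} (h0 : 0 ≤ x) (h1 : x < 1) :
    Summable (fun k : ℤ => x ^ k.natAbs) := by
  apply Summable.of_nat_of_neg_add_one
  · simpa using summable_geometric_of_lt_one h0 h1
  · have hg : Summable (fun n : ℕ => x ^ (n+1)) := by
      exact (summable_nat_add_iff 1).2 (summable_geometric_of_lt_one h0 h1)
    exact hg.congr fun n => congrArg (x ^ ·) (natAbs_neg_succ n).symm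

private lemma tsum_pow_natAbs {x : ℝ} (h0 : 0 ≤ x) (h1 : x < 1) :
    ∑' k : ℤ, x ^ k.natAbs = (1 + x) * (1 - x)⁻¹ := by
  have hgeo := summable_geometric_of_lt_one h0 h1
  have hg1 : Summable (fun n : ℕ => x ^ (n+1)) := (summable_nat_add_iff 1).2 hgeo
  rw [tsum_of_nat_of_neg_add_one (by simpa using hgeo)
    (hg1.congr fun n => congrArg (x ^ ·) (natAbs_neg_succ n).symm)]
  have e1 : ∑' n : ℕ, x ^ ((n:ℤ)).natAbs = (1-x)⁻¹ := by
    rw [show (fun n : ℕ => x ^ ((n:ℤ)).natAbs) = fun n : ℕ => x ^ n by funext n; simp,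
      tsum_geometric_of_lt_one h0 h1]
  have e2 : ∑' n : ℕ, x ^ ((-((n:ℤ) + 1)).natAbs) = x * (1-x)⁻¹ := by
    have : (fun n : ℕ => x ^ ((-((n:ℤ) + 1)).natAbs)) = fun n : ℕ => x * x ^ n := by
      funext n
      rw [natAbs_neg_succ n, pow_succ]; ring
    rw [this, tsum_mul_left, tsum_geometric_of_lt_one h0 h1]
  rw [e1, e2]; ring

private lemma besselJint_sq_neg (L : ℝ) (k : ℤ) :
    besselJint L (-k) * besselJint L (-k) = besselJint L k * besselJint L k := by
  have key : ∀ (a : ℕ) (y : ℝ), ((-1:ℝ)^a * y) * ((-1:ℝ)^a * y) = y * y := by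
    intro a y
    calc ((-1:ℝ)^a * y) * ((-1:ℝ)^a * y) = ((-1:ℝ)*(-1))^a * (y*y) := by
          rw [mul_pow]; ring
      _ = y * y := by norm_num
  unfold besselJint
  rcases lt_trichotomy k 0 with h | h | h
  · rw [if_pos (by omega : (0:ℤ) ≤ -k), if_neg (by omega : ¬ (0:ℤ) ≤ k)]
    exact (key _ _).symm
  · subst h; norm_num
  · rw [if_neg (by omega : ¬ (0:ℤ) ≤ -k), if_pos h.le, neg_neg]
    exact key _ _

section K
variable {L : ℝ} (hL0 : 0 < L) (hL4 : L ≤ 1/4)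
include hL0 hL4

private lemma jsq_le (k : ℤ) :
    besselJint L k * besselJint L k ≤ 4 * (L ^ 2) ^ k.natAbs := by
  have h := besselJint_abs_le_two hL0.le hL4 k
  have h0 : (0:ℝ) ≤ L ^ k.natAbs := pow_nonneg hL0.le _
  have e : (L ^ k.natAbs) * L ^ k.natAbs = (L ^ 2) ^ k.natAbs := by
    rw [← pow_add, ← pow_mul, two_mul]
  nlinarith [abs_nonneg (besselJint L k), sq_abs (besselJint L k),
    sq_nonneg (besselJint L k)]

private lemma summable_jsqZ : Summable (fun k : ℤ => besselJint L k * besselJint L k) := by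
  have hq1 : L ^ 2 < 1 := by nlinarith
  refine Summable.of_nonneg_of_le (fun k => mul_self_nonneg _) (fun k => jsq_le hL0 hL4 k)
    (((summable_pow_natAbs (sq_nonneg L) hq1).mul_left 4))

private lemma summable_jsq_shift (m : ℤ) :
    Summable (fun j : ℕ => besselJint L (m + j + 1) * besselJint L (m + j + 1)) := by
  have := (summable_jsqZ hL0 hL4).comp_injective
    (i := fun j : ℕ => m + j + 1) (fun a b h => by simp only [] at h; omega)
  exact this

private lemma KBeDiag_nonneg (m : ℤ) : 0 ≤ KBeDiag L m :=
  tsum_nonneg (fun j => mul_self_nonneg _)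

end K

section K2
variable {L : ℝ} (hL0 : 0 < L) (hL4 : L ≤ 1/4)
include hL0 hL4

private lemma summable_g_shift1 :
    Summable (fun n : ℕ => besselJint L ((n:ℤ) + 1) * besselJint L ((n:ℤ) + 1)) := by
  have := (summable_jsqZ hL0 hL4).comp_injective
    (i := fun n : ℕ => (n:ℤ) + 1) (fun a b h => by simp only [] at h; omega)
  exact this

private lemma Sigma1_le :
    ∑' n : ℕ, besselJint L ((n:ℤ) + 1) * besselJint L ((n:ℤ) + 1) ≤ L^2 + 7 * L^4 := by
  have hL1 : L < 1 := by linarith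
  set q : ℝ := L ^ 2 with hq
  have hq0 : 0 < q := by positivity
  have hq16 : q ≤ 1/16 := by rw [hq]; nlinarith
  have hq1 : q < 1 := by linarith
  set iu : ℝ := (1 - q)⁻¹ with hiu
  have h1q : (0:ℝ) < 1 - q := by linarith
  have hiu0 : 0 < iu := inv_pos.2 h1q
  have hiuq : iu * (1 - q) = 1 := inv_mul_cancel₀ (by linarith)
  have hiu2 : iu ≤ 2 := by rw [hiu, inv_le_comm₀ h1q (by norm_num)]; linarith
  have hiu12 : iu ≤ 1 + 2*q := by nlinarith
  set c : ℕ → ℝ := fun n => iu^2 * (q^(n+1) * (if n = 0 then 1 else 1/4)) with hc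
  have hcs : Summable c := by
    have : Summable (fun n : ℕ => q^(n+1)) :=
      (summable_nat_add_iff 1).2 (summable_geometric_of_lt_one hq0.le hq1)
    apply Summable.of_nonneg_of_le (fun n => by positivity) (fun n => ?_)
      (this.mul_left (iu^2))
    rw [hc]
    simp only []
    rcases eq_or_ne n 0 with h | h <;> simp [h] <;>
      nlinarith [mul_nonneg (sq_nonneg iu) (pow_nonneg hq0.le (n+1)),
        mul_nonneg (sq_nonneg iu) (pow_nonneg hq0.le 1)]
  have hterm : ∀ n : ℕ, besselJint L ((n:ℤ) + 1) * besselJint L ((n:ℤ) + 1) ≤ c n := by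
    intro n
    have hna : ((n:ℤ) + 1).natAbs = n + 1 := by omega
    have hb := besselJint_abs_le hL0.le hL1 ((n:ℤ) + 1)
    rw [hna] at hb
    have hbn : |besselJint L ((n:ℤ) + 1)| ≤ L^(n+1) / Nat.factorial (n+1) * iu := hb
    have hLn : (0:ℝ) ≤ L^(n+1) := by positivity
    have hqpow : (L^(n+1)) * (L^(n+1)) = q^(n+1) := by
      rw [hq, ← pow_add, ← pow_mul, two_mul]
    have habs : ∀ B : ℝ, |besselJint L ((n:ℤ) + 1)| ≤ B →
        besselJint L ((n:ℤ) + 1) * besselJint L ((n:ℤ) + 1) ≤ B * B := by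
      intro B hB
      rw [← abs_mul_abs_self]
      exact mul_self_le_mul_self (abs_nonneg _) hB
    rcases eq_or_ne n 0 with h | h
    · subst h
      simp only [hc, if_pos rfl]
      have hf1 : (Nat.factorial 1 : ℝ) = 1 := by norm_num [Nat.factorial]
      rw [hf1] at hbn
      refine (habs _ hbn).trans (le_of_eq ?_)
      have : L ^ (0+1) / 1 * iu * (L ^ (0+1) / 1 * iu) =
          (L ^ (0+1) * L ^ (0+1)) * iu ^ 2 := by ring
      rw [this, hqpow]; norm_num [mul_comm]
    · have hfac : (2:ℝ) ≤ (Nat.factorial (n+1) : ℝ) := by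
        have : (2:ℕ) ≤ Nat.factorial (n+1) := by
          calc (2:ℕ) = Nat.factorial 2 := rfl
          _ ≤ Nat.factorial (n+1) := Nat.factorial_le (by omega)
        exact_mod_cast this
      have hb2 : |besselJint L ((n:ℤ) + 1)| ≤ L^(n+1) / 2 * iu := by
        refine hbn.trans ?_
        have : L^(n+1) / (Nat.factorial (n+1) : ℝ) ≤ L^(n+1) / 2 :=
          div_le_div_of_nonneg_left hLn (by norm_num) hfac
        nlinarith
      simp only [hc, if_neg h]
      refine (habs _ hb2).trans (le_of_eq ?_)
      have : L ^ (n+1) / 2 * iu * (L ^ (n+1) / 2 * iu) =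
          (L ^ (n+1) * L ^ (n+1)) * iu ^ 2 / 4 := by ring
      rw [this, hqpow]; ring
  have htsum_c : ∑' n, c n = iu^2 * q + iu^3 * q^2 / 4 := by
    rw [Summable.tsum_eq_zero_add hcs]
    have h0 : c 0 = iu^2 * q := by simp [hc]
    have hrest : ∑' n : ℕ, c (n + 1) = iu^3 * q^2 / 4 := by
      have : (fun n : ℕ => c (n + 1)) = fun n : ℕ => (iu^2 * q^2 / 4) * q^n := by
        funext n
        simp only [hc, if_neg (Nat.succ_ne_zero n)]
        ring
      rw [this, tsum_mul_left, tsum_geometric_of_lt_one hq0.le hq1, ← hiu]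
      ring
    rw [h0, hrest]
  calc ∑' n : ℕ, besselJint L ((n:ℤ) + 1) * besselJint L ((n:ℤ) + 1)
      ≤ ∑' n, c n := Summable.tsum_le_tsum hterm (summable_g_shift1 hL0 hL4) hcs
    _ = iu^2 * q + iu^3 * q^2 / 4 := htsum_c
    _ ≤ q + 7 * q^2 := by
        have h2 : iu^2 ≤ (1+2*q)^2 := by nlinarith
        have h3 : iu^3 ≤ 8 := by nlinarith
        have h4 : iu^2 * q ≤ (1+2*q)^2 * q := mul_le_mul_of_nonneg_right h2 hq0.le
        have h5 : iu^3 * q^2 ≤ 8 * q^2 := mul_le_mul_of_nonneg_right h3 (by positivity)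
        have h6 : q*q^2 ≤ (1/16)*q^2 := mul_le_mul_of_nonneg_right hq16 (by positivity)
        nlinarith [h4, h5, h6]
    _ = L^2 + 7 * L^4 := by rw [hq]; ring

end K2

section K3
variable {L : ℝ} (hL0 : 0 < L) (hL4 : L ≤ 1/4)
include hL0 hL4

private lemma g_zero_le : besselJint L 0 * besselJint L 0 ≤ 1 - 2*L^2 + 2*L^4 := by
  have h := besselJnat_zero_close hL0.le hL4
  have e : besselJint L 0 = besselJnat L 0 := by unfold besselJint; norm_num
  rw [e]
  have h1 := abs_le.1 h
  have hq16 : L^2 ≤ 1/16 := by nlinarith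
  have hq40 : (0:ℝ) ≤ L^4 := by positivity
  have hq44 : L^4 ≤ (1/16) * L^2 := by
    nlinarith [mul_le_mul_of_nonneg_right hq16 (sq_nonneg L)]
  have hU : besselJnat L 0 ≤ 1 - L^2 + L^4/3 := by linarith [h1.2]
  have hx0 : 0 ≤ besselJnat L 0 := by nlinarith [h1.1]
  have hU0 : (0:ℝ) ≤ 1 - L^2 + L^4/3 := by nlinarith
  have hsq : besselJnat L 0 * besselJnat L 0 ≤
      (1 - L^2 + L^4/3) * (1 - L^2 + L^4/3) := mul_le_mul hU hU hx0 hU0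
  nlinarith [mul_le_mul_of_nonneg_right hq44 hq40, sq_nonneg (L^2)]

set_option maxHeartbeats 4000000 in
private lemma tsumZ_g_le :
    ∑' k : ℤ, besselJint L k * besselJint L k ≤ 1 + 16 * L^4 := by
  have hs := summable_jsqZ hL0 hL4
  have hsnat : Summable (fun n : ℕ => besselJint L (n:ℤ) * besselJint L (n:ℤ)) := by
    have := hs.comp_injective (i := fun n : ℕ => (n:ℤ)) (fun a b h => Nat.cast_injective h)
    exact this
  have hsneg : Summable (fun n : ℕ =>
      besselJint L (-((n:ℤ)+1)) * besselJint L (-((n:ℤ)+1))) := by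
    exact (summable_g_shift1 hL0 hL4).congr fun n => (besselJint_sq_neg L ((n:ℤ)+1)).symm
  rw [tsum_of_nat_of_neg_add_one hsnat hsneg]
  have e1 : ∑' n : ℕ, besselJint L (-((n:ℤ)+1)) * besselJint L (-((n:ℤ)+1)) =
      ∑' n : ℕ, besselJint L ((n:ℤ)+1) * besselJint L ((n:ℤ)+1) :=
    tsum_congr fun n => besselJint_sq_neg L ((n:ℤ)+1)
  have e2 : ∑' n : ℕ, besselJint L (n:ℤ) * besselJint L (n:ℤ) =
      besselJint L 0 * besselJint L 0 +
      ∑' n : ℕ, besselJint L ((n:ℤ)+1) * besselJint L ((n:ℤ)+1) := by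
    rw [Summable.tsum_eq_zero_add hsnat]
    push_cast
    norm_num
  rw [e1, e2]
  have hS := Sigma1_le hL0 hL4
  have hg0 := g_zero_le hL0 hL4
  have hq16 : L^2 ≤ 1/16 := by nlinarith
  nlinarith [sq_nonneg L]

private lemma KBeDiag_le_one (m : ℤ) : KBeDiag L m ≤ 1 + 16 * L^4 := by
  refine le_trans ?_ (tsumZ_g_le hL0 hL4)
  exact Summable.tsum_le_tsum_of_inj (fun j : ℕ => m + j + 1)
    (fun a b h => by simp only [] at h; omega)
    (fun c _ => mul_self_nonneg _) (fun j => le_refl _)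
    (summable_jsq_shift hL0 hL4 m) (summable_jsqZ hL0 hL4)

private lemma KBeDiag_small {m : ℤ} (hm : 0 ≤ m) : KBeDiag L m ≤ 1/2 := by
  have h1 : KBeDiag L m ≤
      ∑' n : ℕ, besselJint L ((n:ℤ) + 1) * besselJint L ((n:ℤ) + 1) := by
    refine Summable.tsum_le_tsum_of_inj (fun j : ℕ => m.toNat + j)
      (fun a b h => by simp only [] at h; omega)
      (fun c _ => mul_self_nonneg _) (fun j => le_of_eq ?_)
      (summable_jsq_shift hL0 hL4 m) (summable_g_shift1 hL0 hL4)
    have e : ((m.toNat + j : ℕ) : ℤ) + 1 = m + j + 1 := by push_cast; omega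
    rw [e]
  refine h1.trans ((Sigma1_le hL0 hL4).trans ?_)
  have hq16 : L^2 ≤ 1/16 := by nlinarith
  nlinarith [mul_le_mul_of_nonneg_right hq16 (sq_nonneg L), sq_nonneg L]
end K3

private lemma shifted_pow_le {L : ℝ} (hL0 : 0 < L) (hL4 : L ≤ 1/4) (k : ℤ) :
    L * (2 * L ^ (k+1).natAbs) ≤ 2 * L ^ k.natAbs := by
  have h1 : L * (2 * L ^ (k+1).natAbs) = 2 * L ^ ((k+1).natAbs + 1) := by
    rw [pow_succ]; ring
  rw [h1]
  have h2 : L ^ ((k+1).natAbs + 1) ≤ L ^ k.natAbs :=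
    pow_le_pow_of_le_one hL0.le (by linarith) (by omega)
  linarith

private lemma dker_abs_le {σ : ℤ → ℝ} {L δ : ℝ} {t : ℤ} (hL0 : 0 < L) (hL4 : L ≤ 1/4)
    (hσ0 : ∀ k, 0 ≤ σ k) (hσ1 : ∀ k, σ k ≤ 1) (hδ : 0 < δ)
    (hden : ∀ n : ℤ, δ ≤ 1 - σ (n - t - 1) * KBeDiag L n) (m n : ℤ) :
    |dker σ L t m n| ≤ if m = n then 0 else 8/δ * (L^m.natAbs * L^n.natAbs) := by
  by_cases h : m = n
  · simp [dker, h]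
  rw [if_neg h]
  have hJ := besselJint_abs_le_two hL0.le hL4
  have hpos : 0 < 1 - σ (n - t - 1) * KBeDiag L n := lt_of_lt_of_le hδ (hden n)
  have hinv : (1 - σ (n - t - 1) * KBeDiag L n)⁻¹ ≤ δ⁻¹ :=
    inv_anti₀ hδ (hden n)
  have hinv0 : 0 ≤ (1 - σ (n - t - 1) * KBeDiag L n)⁻¹ := inv_nonneg.2 hpos.le
  have hLn0 : (0:ℝ) ≤ 2 * L ^ n.natAbs := by positivity
  have hLm0 : (0:ℝ) ≤ 2 * L ^ m.natAbs := by positivity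
  -- component bounds
  have hg0 : |ghat σ L t n 0| ≤ δ⁻¹ * (2 * L ^ n.natAbs) := by
    have e : ghat σ L t n 0 = (1 - σ (n - t - 1) * KBeDiag L n)⁻¹ *
        (L * besselJint L (n + 1)) := by simp [ghat]
    rw [e, abs_mul, abs_of_nonneg hinv0]
    refine mul_le_mul hinv ?_ (abs_nonneg _) (by positivity)
    rw [abs_mul, abs_of_nonneg hL0.le]
    calc L * |besselJint L (n+1)| ≤ L * (2 * L ^ (n+1).natAbs) := by
          exact mul_le_mul_of_nonneg_left (hJ (n+1)) hL0.le
      _ ≤ 2 * L ^ n.natAbs := shifted_pow_le hL0 hL4 n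
  have hg1 : |ghat σ L t n 1| ≤ δ⁻¹ * (2 * L ^ n.natAbs) := by
    have e : ghat σ L t n 1 = (1 - σ (n - t - 1) * KBeDiag L n)⁻¹ *
        (-besselJint L n) := by simp [ghat]
    rw [e, abs_mul, abs_of_nonneg hinv0, abs_neg]
    exact mul_le_mul hinv (hJ n) (abs_nonneg _) (by positivity)
  have hf0 : |fhat σ L t m 0| ≤ 2 * L ^ m.natAbs := by
    have e : fhat σ L t m 0 = σ (m - t - 1) * besselJint L m := by simp [fhat]
    rw [e, abs_mul, abs_of_nonneg (hσ0 _)]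
    calc σ (m-t-1) * |besselJint L m| ≤ 1 * (2 * L ^ m.natAbs) :=
          mul_le_mul (hσ1 _) (hJ m) (abs_nonneg _) zero_le_one
      _ = 2 * L ^ m.natAbs := one_mul _
  have hf1 : |fhat σ L t m 1| ≤ 2 * L ^ m.natAbs := by
    have e : fhat σ L t m 1 = σ (m - t - 1) * (L * besselJint L (m + 1)) := by simp [fhat]
    rw [e, abs_mul, abs_of_nonneg (hσ0 _)]
    calc σ (m-t-1) * |L * besselJint L (m+1)| ≤ 1 * |L * besselJint L (m+1)| :=
          mul_le_mul_of_nonneg_right (hσ1 _) (abs_nonneg _)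
      _ = |L * besselJint L (m+1)| := one_mul _
      _ ≤ L * (2 * L ^ (m+1).natAbs) := by
          rw [abs_mul, abs_of_nonneg hL0.le]
          exact mul_le_mul_of_nonneg_left (hJ (m+1)) hL0.le
      _ ≤ 2 * L ^ m.natAbs := shifted_pow_le hL0 hL4 m
  have hdot : ghat σ L t n ⬝ᵥ fhat σ L t m =
      ghat σ L t n 0 * fhat σ L t m 0 + ghat σ L t n 1 * fhat σ L t m 1 := by
    simp [dotProduct, Fin.sum_univ_two]
  have hdotb : |ghat σ L t n ⬝ᵥ fhat σ L t m| ≤ 8/δ * (L^m.natAbs * L^n.natAbs) := by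
    rw [hdot]
    have h0 : |ghat σ L t n 0 * fhat σ L t m 0| ≤
        (δ⁻¹ * (2 * L ^ n.natAbs)) * (2 * L ^ m.natAbs) := by
      rw [abs_mul]
      exact mul_le_mul hg0 hf0 (abs_nonneg _) (by positivity)
    have h1 : |ghat σ L t n 1 * fhat σ L t m 1| ≤
        (δ⁻¹ * (2 * L ^ n.natAbs)) * (2 * L ^ m.natAbs) := by
      rw [abs_mul]
      exact mul_le_mul hg1 hf1 (abs_nonneg _) (by positivity)
    calc |ghat σ L t n 0 * fhat σ L t m 0 + ghat σ L t n 1 * fhat σ L t m 1|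
        ≤ |ghat σ L t n 0 * fhat σ L t m 0| + |ghat σ L t n 1 * fhat σ L t m 1| :=
          abs_add_le _ _
      _ ≤ 2 * ((δ⁻¹ * (2 * L ^ n.natAbs)) * (2 * L ^ m.natAbs)) := by linarith
      _ = 8/δ * (L^m.natAbs * L^n.natAbs) := by
          rw [div_eq_mul_inv]; ring
  have habs1 : (1:ℝ) ≤ |(m:ℝ) - (n:ℝ)| := by
    have h1 : ((m - n : ℤ) : ℝ) = (m:ℝ) - (n:ℝ) := by push_cast; ring
    rw [← h1, ← Int.cast_abs]
    exact_mod_cast Int.one_le_abs (by omega)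
  calc |dker σ L t m n| = |ghat σ L t n ⬝ᵥ fhat σ L t m| / |(m:ℝ) - (n:ℝ)| := by
        rw [dker, if_neg h, abs_div]
    _ ≤ |ghat σ L t n ⬝ᵥ fhat σ L t m| / 1 :=
        div_le_div_of_nonneg_left (abs_nonneg _) one_pos habs1 |>.trans (le_of_eq rfl)
    _ = |ghat σ L t n ⬝ᵥ fhat σ L t m| := div_one _
    _ ≤ 8/δ * (L^m.natAbs * L^n.natAbs) := hdotb

set_option maxHeartbeats 1000000 in
/-- if `∏_{i≥1} (1 - σ(-i-s)) > 0`, there are `L* > 0` and `c > 0` such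
that for all `0 < L < L*` and all square-summable `r : ℤ' → ℂ²`, the sums
`(Dr)(a) = ∑_b d(a,b) r(b)` converge absolutely, `Dr` is square-summable, and
`‖Dr‖_{ℓ²} ≤ c L ‖r‖_{ℓ²}`. -/
theorem dker_operator_small (σ : ℤ → ℝ) (hσ : ∀ k : ℤ, σ k ∈ Set.Icc (0 : ℝ) 1)
    (hsum : Summable (fun k : {k : ℤ // k < 0} => σ k)) (t : ℤ)
    (hQ0 : 0 < ∏' i : ℕ, (1 - σ (-(i : ℤ) - t - 2))) :
    ∃ Lstar c : ℝ, 0 < Lstar ∧ 0 < c ∧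
      ∀ L : ℝ, 0 < L → L < Lstar →
        ∀ r : ℤ → EuclideanSpace ℂ (Fin 2), Summable (fun b : ℤ => ‖r b‖ ^ 2) →
          (∀ m : ℤ, Summable (fun n : ℤ => |dker σ L t m n| * ‖r n‖)) ∧
          Summable (fun m : ℤ => ‖∑' n : ℤ, ((dker σ L t m n : ℂ) • r n)‖ ^ 2) ∧
          Real.sqrt (∑' m : ℤ, ‖∑' n : ℤ, ((dker σ L t m n : ℂ) • r n)‖ ^ 2) ≤
            c * L * Real.sqrt (∑' b : ℤ, ‖r b‖ ^ 2) := by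
  classical
  have hσ0 : ∀ k, 0 ≤ σ k := fun k => (hσ k).1
  have hσ1 : ∀ k, σ k ≤ 1 := fun k => (hσ k).2
  set P : ℝ := ∏' i : ℕ, (1 - σ (-(i : ℤ) - t - 2)) with hPdef
  have hP : 0 < P := hQ0
  have hPle : ∀ i : ℕ, P ≤ 1 - σ (-(i : ℤ) - t - 2) := fun i =>
    tprod_le_apply (fun j => by linarith [hσ1 (-(j:ℤ) - t - 2)])
      (fun j => by linarith [hσ0 (-(j:ℤ) - t - 2)]) i
  have hP1 : P ≤ 1 := (hPle 0).trans (by have := hσ0 (-((0:ℕ):ℤ) - t - 2); linarith)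
  set δ : ℝ := min (P/2) (1/2) with hδdef
  have hδ : 0 < δ := lt_min (by linarith) (by norm_num)
  have hδ2 : δ ≤ 1/2 := min_le_right _ _
  refine ⟨min (1/4) (P/32), 24/δ, lt_min (by norm_num) (by positivity), by positivity, ?_⟩
  intro L hL0 hLs r hr
  have hL4 : L ≤ 1/4 := le_of_lt (lt_of_lt_of_le hLs (min_le_left _ _))
  have hLP : L ≤ P/32 := le_of_lt (lt_of_lt_of_le hLs (min_le_right _ _))
  have hL1 : L < 1 := by linarith
  -- the lower bound on the denominators
  have hden : ∀ n : ℤ, δ ≤ 1 - σ (n - t - 1) * KBeDiag L n := by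
    intro n
    have hK0 : 0 ≤ KBeDiag L n := KBeDiag_nonneg hL0 hL4 n
    rcases le_or_gt 0 n with hn | hn
    · have hK : KBeDiag L n ≤ 1/2 := KBeDiag_small hL0 hL4 hn
      have hprod : σ (n-t-1) * KBeDiag L n ≤ 1/2 := by
        calc σ (n-t-1) * KBeDiag L n ≤ 1 * (1/2) :=
              mul_le_mul (hσ1 _) hK hK0 zero_le_one
          _ = 1/2 := by norm_num
      linarith
    · have hK : KBeDiag L n ≤ 1 + 16*L^4 := KBeDiag_le_one hL0 hL4 n
      have hσle : σ (n - t - 1) ≤ 1 - P := by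
        have h2 := hPle ((-n-1).toNat)
        have e : (-(((-n-1).toNat : ℕ) : ℤ)) - t - 2 = n - t - 1 := by
          push_cast [Int.toNat_of_nonneg (by omega : (0:ℤ) ≤ -n-1)]; ring
        rw [e] at h2
        linarith
      have hL4le : L^4 ≤ L := by
        calc L^4 ≤ L^1 := pow_le_pow_of_le_one hL0.le hL1.le (by norm_num)
          _ = L := pow_one L
      have hL4P : 16 * L^4 ≤ P/2 := by linarith
      have hprod : σ (n-t-1) * KBeDiag L n ≤ (1-P) * (1 + 16*L^4) :=
        mul_le_mul hσle hK hK0 (by linarith)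
      have hexp : (1-P)*(1+16*L^4) ≤ 1 - P/2 := by nlinarith [pow_nonneg hL0.le 4]
      have : δ ≤ P/2 := min_le_left _ _
      linarith
  have hdb := dker_abs_le hL0 hL4 hσ0 hσ1 hδ hden
  -- geometric weights
  set q : ℝ := L^2 with hqdef
  have hq0 : 0 < q := by positivity
  have hq16 : q ≤ 1/16 := by rw [hqdef]; nlinarith
  have hq1 : q < 1 := by linarith
  set w : ℤ → ℝ := fun k => q ^ k.natAbs with hwdef
  have hw0 : ∀ k, 0 ≤ w k := fun k => pow_nonneg hq0.le _
  have hwS : Summable w := summable_pow_natAbs hq0.le hq1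
  set U : ℝ := ∑' k : ℤ, w k with hUdef
  have hUval : U = (1 + q) * (1 - q)⁻¹ := tsum_pow_natAbs hq0.le hq1
  have h1q : (0:ℝ) < 1 - q := by linarith
  have hU3 : U ≤ 1 + 3*q := by
    rw [hUval, ← div_eq_mul_inv, div_le_iff₀ h1q]
    nlinarith
  have hU1 : 1 ≤ U := Summable.le_tsum hwS 0 (fun j _ => hw0 j)
  have hw2S : Summable (fun k : ℤ => w k * w k) := by
    have e : (fun k : ℤ => w k * w k) = fun k : ℤ => (q^2) ^ k.natAbs := by
      funext k
      rw [hwdef]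
      simp only []
      rw [← pow_add, ← two_mul, pow_mul]
    rw [e]
    exact summable_pow_natAbs (by positivity) (by nlinarith)
  have hV1 : 1 ≤ ∑' k : ℤ, w k * w k := by
    have := Summable.le_tsum hw2S 0 (fun j _ => mul_nonneg (hw0 j) (hw0 j))
    simpa [hwdef] using this
  -- the majorant kernel β and its row sums
  set C : ℝ := 8/δ with hCdef
  have hC0 : 0 < C := by positivity
  set β : ℤ → ℤ → ℝ := fun m n => if m = n then 0 else C * (L^m.natAbs * L^n.natAbs) with hβdef
  have hβ0 : ∀ m n, 0 ≤ β m n := by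
    intro m n
    rw [hβdef]
    simp only []
    split_ifs
    · exact le_refl 0
    · positivity
  have hLL : ∀ a : ℕ, L^a * L^a = q^a := by
    intro a
    rw [hqdef, ← pow_add, ← pow_mul, two_mul]
  have hβsq_eq : ∀ m : ℤ, (fun n => (β m n)^2) =
      fun n => (C^2 * w m) * (if n = m then 0 else w n) := by
    intro m
    funext n
    rw [hβdef, hwdef]
    simp only []
    by_cases h : m = n
    · rw [if_pos h, if_pos h.symm]
      norm_num
    · rw [if_neg h, if_neg (Ne.symm h)]
      have : (C * (L^m.natAbs * L^n.natAbs))^2 =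
          C^2 * ((L^m.natAbs * L^m.natAbs) * (L^n.natAbs * L^n.natAbs)) := by ring
      rw [this, hLL m.natAbs, hLL n.natAbs]
      ring
  have hiteS : ∀ m : ℤ, Summable (fun n : ℤ => if n = m then 0 else w n) := by
    intro m
    refine Summable.of_nonneg_of_le (fun n => ?_) (fun n => ?_) hwS
    · split_ifs
      · exact le_refl 0
      · exact hw0 n
    · split_ifs
      · exact hw0 n
      · exact le_refl _
  have hiteT : ∀ m : ℤ, ∑' n : ℤ, (if n = m then 0 else w n) = U - w m := by
    intro m
    have h := Summable.tsum_eq_add_tsum_ite hwS m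
    rw [hUdef]
    linarith
  have hβsqS : ∀ m : ℤ, Summable (fun n => (β m n)^2) := by
    intro m
    rw [hβsq_eq m]
    exact (hiteS m).mul_left _
  have hβsqT : ∀ m : ℤ, ∑' n : ℤ, (β m n)^2 = C^2 * w m * (U - w m) := by
    intro m
    rw [hβsq_eq m, tsum_mul_left, hiteT m]
  -- norms of r
  set ρ : ℤ → ℝ := fun n => ‖r n‖ with hρdef
  have hρ0 : ∀ n, 0 ≤ ρ n := fun n => norm_nonneg _
  have hρS : Summable (fun n => ρ n ^ 2) := hr
  set S : ℝ := ∑' b : ℤ, ρ b ^ 2 with hSdef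
  have hS0 : 0 ≤ S := tsum_nonneg fun b => sq_nonneg _
  -- claim 1 : absolute convergence of the rows
  have hrow : ∀ m : ℤ, Summable (fun n : ℤ => |dker σ L t m n| * ρ n) := by
    intro m
    refine Summable.of_nonneg_of_le
      (fun n => mul_nonneg (abs_nonneg _) (hρ0 n)) (fun n => ?_)
      (summable_mul_of_sq (hβ0 m) hρ0 (hβsqS m) hρS)
    exact mul_le_mul_of_nonneg_right ((hdb m n).trans (le_of_eq (hβdef ▸ rfl))) (hρ0 n)
  -- pointwise bound on the row sums
  have hDr : ∀ m : ℤ, ‖∑' n : ℤ, ((dker σ L t m n : ℂ) • r n)‖ ^ 2 ≤ (C^2 * w m * (U - w m)) * S := by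
    intro m
    have hnorm_eq : (fun n : ℤ => ‖(dker σ L t m n : ℂ) • r n‖) =
        fun n : ℤ => |dker σ L t m n| * ρ n := by
      funext n
      rw [norm_smul, Complex.norm_real, Real.norm_eq_abs, hρdef]
    have h1 : ‖∑' n : ℤ, ((dker σ L t m n : ℂ) • r n)‖ ≤ ∑' n : ℤ, |dker σ L t m n| * ρ n := by
      have := norm_tsum_le_tsum_norm (f := fun n : ℤ => (dker σ L t m n : ℂ) • r n)
        (by rw [hnorm_eq]; exact hrow m)
      rwa [hnorm_eq] at this
    have h2 : ∑' n : ℤ, |dker σ L t m n| * ρ n ≤ ∑' n : ℤ, β m n * ρ n := by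
      refine Summable.tsum_le_tsum (fun n => mul_le_mul_of_nonneg_right (hdb m n) (hρ0 n)) (hrow m) ?_
      exact summable_mul_of_sq (hβ0 m) hρ0 (hβsqS m) hρS
    have h3 : ∑' n : ℤ, β m n * ρ n ≤
        Real.sqrt (∑' n : ℤ, (β m n)^2) * Real.sqrt (∑' n : ℤ, ρ n ^2) :=
      tsum_mul_le_sqrt (hβ0 m) hρ0 (hβsqS m) hρS
    have h4 : ‖∑' n : ℤ, ((dker σ L t m n : ℂ) • r n)‖ ≤
        Real.sqrt (∑' n : ℤ, (β m n)^2) * Real.sqrt S := by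
      rw [hSdef]
      exact h1.trans (h2.trans h3)
    have h5 : 0 ≤ Real.sqrt (∑' n : ℤ, (β m n)^2) * Real.sqrt S :=
      mul_nonneg (Real.sqrt_nonneg _) (Real.sqrt_nonneg _)
    calc ‖∑' n : ℤ, ((dker σ L t m n : ℂ) • r n)‖ ^ 2
        ≤ (Real.sqrt (∑' n : ℤ, (β m n)^2) * Real.sqrt S)^2 :=
          pow_le_pow_left₀ (norm_nonneg _) h4 2
      _ = (∑' n : ℤ, (β m n)^2) * S := by
          rw [mul_pow, Real.sq_sqrt (tsum_nonneg fun n => sq_nonneg _), Real.sq_sqrt hS0]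
      _ = (C^2 * w m * (U - w m)) * S := by rw [hβsqT m]
  -- summability of the majorant in m
  have hmaj : Summable (fun m : ℤ => (C^2 * w m * (U - w m)) * S) := by
    have e : (fun m : ℤ => (C^2 * w m * (U - w m)) * S) =
        fun m : ℤ => (C^2 * S) * (w m * U - w m * w m) := by
      funext m; ring
    rw [e]
    exact (((hwS.mul_right U).sub hw2S).mul_left _)
  have hsq : Summable (fun m : ℤ => ‖∑' n : ℤ, ((dker σ L t m n : ℂ) • r n)‖ ^ 2) :=
    Summable.of_nonneg_of_le (fun m => sq_nonneg _) hDr hmaj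
  refine ⟨hrow, hsq, ?_⟩
  -- the final quantitative bound
  have htot : ∑' m : ℤ, ‖∑' n : ℤ, ((dker σ L t m n : ℂ) • r n)‖ ^ 2 ≤
      (C^2 * S) * (U * U - ∑' k : ℤ, w k * w k) := by
    have h1 : ∑' m : ℤ, ‖∑' n : ℤ, ((dker σ L t m n : ℂ) • r n)‖ ^ 2 ≤
        ∑' m : ℤ, (C^2 * w m * (U - w m)) * S := Summable.tsum_le_tsum hDr hsq hmaj
    have h2 : ∑' m : ℤ, (C^2 * w m * (U - w m)) * S =
        (C^2 * S) * (U * U - ∑' k : ℤ, w k * w k) := by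
      have e : (fun m : ℤ => (C^2 * w m * (U - w m)) * S) =
          fun m : ℤ => (C^2 * S) * (w m * U - w m * w m) := by
        funext m; ring
      rw [e, tsum_mul_left, Summable.tsum_sub (hwS.mul_right U) hw2S, tsum_mul_right, ← hUdef]
    rw [h2] at h1
    exact h1
  have hUV : U * U - (∑' k : ℤ, w k * w k) ≤ 9 * q := by nlinarith
  have htot2 : ∑' m : ℤ, ‖∑' n : ℤ, ((dker σ L t m n : ℂ) • r n)‖ ^ 2 ≤
      (24/δ * L)^2 * S := by
    have h3 : (C^2 * S) * (U * U - ∑' k : ℤ, w k * w k) ≤ (C^2 * S) * (9 * q) :=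
      mul_le_mul_of_nonneg_left hUV (by positivity)
    have h4 : (C^2 * S) * (9 * q) ≤ (24/δ * L)^2 * S := by
      rw [hCdef, hqdef]
      have : (8/δ)^2 * S * (9 * L^2) = (24/δ * L)^2 * S := by ring
      linarith [this.le]
    linarith
  calc Real.sqrt (∑' m : ℤ, ‖∑' n : ℤ, ((dker σ L t m n : ℂ) • r n)‖ ^ 2)
      ≤ Real.sqrt ((24/δ * L)^2 * S) := Real.sqrt_le_sqrt htot2
    _ = (24/δ * L) * Real.sqrt S := by
        rw [Real.sqrt_mul (sq_nonneg _), Real.sqrt_sq (by positivity)]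
    _ = 24/δ * L * Real.sqrt (∑' b : ℤ, ρ b ^ 2) := by rw [hSdef]
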